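/- Vanishing of mixed cumulants: if the index set {1,...,k} (k ≥ 2) splits into two non-empty disjoint subsets I and J such that the families (X_i)_{i∈I} and (X_j)_{j∈J} are independent, then the joint cumulant κ(X_1,...,X_k) = 0. -/

import Mathlib

open Finset


/-- partial injections between `P` and `Q` -/
def PIset {γ δ : Type*} [DecidableEq γ] [DecidableEq δ] (P : Finset γ) (Q : Finset δ) :
    Finset (Finset (γ × δ)) :=
  (P ×ˢ Q).powerset.filter (fun E =>
    (∀ p ∈ E, ∀ q ∈ E, p.1 = q.1 → p = q) ∧ (∀ p ∈ E, ∀ q ∈ E, p.2 = q.2 → p = q))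

lemma mem_PIset {γ δ : Type*} [DecidableEq γ] [DecidableEq δ] {P : Finset γ} {Q : Finset δ}
    {E : Finset (γ × δ)} :
    E ∈ PIset P Q ↔ E ⊆ P ×ˢ Q ∧ (∀ p ∈ E, ∀ q ∈ E, p.1 = q.1 → p = q) ∧
      (∀ p ∈ E, ∀ q ∈ E, p.2 = q.2 → p = q) := by
  simp [PIset, and_assoc]

noncomputable def wgt (R : Type*) [CommRing R] (n : ℕ) : R :=
  (Nat.factorial (n - 1) : R) * (-1 : R) ^ (n - 1)

def res {k : ℕ} (I : Finset (Fin k)) (π : Finpartition (Finset.univ : Finset (Fin k))) :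
    Finset (Finset (Fin k)) :=
  (π.parts.image (· ∩ I)).erase ∅

lemma parts_subset_eq {α : Type*} [DecidableEq α] {s : Finset α} (π₁ π₂ : Finpartition s)
    (h : π₁.parts ⊆ π₂.parts) : π₁ = π₂ := by
  apply Finpartition.ext
  apply Finset.Subset.antisymm h
  intro B hB
  obtain ⟨x, hx⟩ := π₂.nonempty_of_mem_parts hB
  have hxs : x ∈ s := π₂.le hB hx
  obtain ⟨A, hA, hxA⟩ := π₁.exists_mem hxs
  have hBA : B = A := π₂.eq_of_mem_parts hB (h hA) hx hxA
  exact hBA ▸ hA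

section fiberzero

variable {R : Type*} [CommRing R] {k : ℕ}
variable {I J : Finset (Fin k)} (hd : Disjoint I J) (hIJ : I ∪ J = Finset.univ)
variable {P Q : Finset (Finset (Fin k))}
variable (hPne : ∀ A ∈ P, A.Nonempty) (hPI : ∀ A ∈ P, A ⊆ I)
variable (hQne : ∀ C ∈ Q, C.Nonempty) (hQJ : ∀ C ∈ Q, C ⊆ J)
variable (hPd : (P : Set (Finset (Fin k))).PairwiseDisjoint id)
variable (hQd : (Q : Set (Finset (Fin k))).PairwiseDisjoint id)
variable (hPsup : P.sup id = I) (hQsup : Q.sup id = J)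

/-- the parts of the partition associated to a partial injection -/
def pts (I J : Finset (Fin k)) (P Q : Finset (Finset (Fin k)))
    (E : Finset (Finset (Fin k) × Finset (Fin k))) : Finset (Finset (Fin k)) :=
  ((P \ E.image Prod.fst) ∪ (Q \ E.image Prod.snd)) ∪ E.image (fun p => p.1 ∪ p.2)

section ptslemmas

variable {E : Finset (Finset (Fin k) × Finset (Fin k))} (hE : E ∈ PIset P Q)

include hE in
lemma hfst : ∀ p ∈ E, p.1 ∈ P := fun p hp =>
  (Finset.mem_product.mp ((mem_PIset.mp hE).1 hp)).1

include hE in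
lemma hsnd : ∀ p ∈ E, p.2 ∈ Q := fun p hp =>
  (Finset.mem_product.mp ((mem_PIset.mp hE).1 hp)).2

include hd hPI hQJ in
lemma dIJ : ∀ A, A ⊆ I → ∀ C, C ⊆ J → Disjoint A C := fun A hA C hC => hd.mono hA hC

include hE hd hPI hQJ hPd hQd hPne hQne in
lemma pts_pd : ((pts I J P Q E : Finset _) : Set (Finset (Fin k))).PairwiseDisjoint id := by
  classical
  obtain ⟨hsub, i1, i2⟩ := mem_PIset.mp hE
  have hf : ∀ p ∈ E, p.1 ∈ P := hfst hE
  have hs : ∀ p ∈ E, p.2 ∈ Q := hsnd hE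
  -- helper disjointness facts
  have dXY : ∀ x ∈ P \ E.image Prod.fst, ∀ y ∈ Q \ E.image Prod.snd, Disjoint x y := by
    intro x hx y hy
    exact hd.mono (hPI x (Finset.mem_sdiff.mp hx).1) (hQJ y (Finset.mem_sdiff.mp hy).1)
  have dXZ : ∀ x ∈ P \ E.image Prod.fst, ∀ y ∈ E.image (fun p => p.1 ∪ p.2), Disjoint x y := by
    intro x hx y hy
    obtain ⟨p, hp, rfl⟩ := Finset.mem_image.mp hy
    obtain ⟨hxP, hxF⟩ := Finset.mem_sdiff.mp hx
    have hne : x ≠ p.1 := by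
      rintro rfl
      exact hxF (Finset.mem_image.mpr ⟨p, hp, rfl⟩)
    refine Finset.disjoint_union_right.mpr ⟨hPd hxP (hf p hp) hne, ?_⟩
    exact hd.mono (hPI x hxP) (hQJ p.2 (hs p hp))
  have dYZ : ∀ x ∈ Q \ E.image Prod.snd, ∀ y ∈ E.image (fun p => p.1 ∪ p.2), Disjoint x y := by
    intro x hx y hy
    obtain ⟨p, hp, rfl⟩ := Finset.mem_image.mp hy
    obtain ⟨hxQ, hxG⟩ := Finset.mem_sdiff.mp hx
    have hne : x ≠ p.2 := by
      rintro rfl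
      exact hxG (Finset.mem_image.mpr ⟨p, hp, rfl⟩)
    refine Finset.disjoint_union_right.mpr ⟨?_, hQd hxQ (hs p hp) hne⟩
    exact (hd.mono (hPI p.1 (hf p hp)) (hQJ x hxQ)).symm
  intro x hx y hy hxy
  simp only [pts, Finset.coe_union, Set.mem_union, Finset.mem_coe] at hx hy
  rcases hx with (hx | hx) | hx <;> rcases hy with (hy | hy) | hy
  · exact hPd (Finset.mem_sdiff.mp hx).1 (Finset.mem_sdiff.mp hy).1 hxy
  · exact dXY x hx y hy
  · exact dXZ x hx y hy
  · exact (dXY y hy x hx).symm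
  · exact hQd (Finset.mem_sdiff.mp hx).1 (Finset.mem_sdiff.mp hy).1 hxy
  · exact dYZ x hx y hy
  · exact (dXZ y hy x hx).symm
  · exact (dYZ y hy x hx).symm
  · -- Z Z
    obtain ⟨p, hp, rfl⟩ := Finset.mem_image.mp hx
    obtain ⟨q, hq, rfl⟩ := Finset.mem_image.mp hy
    have hpq : p ≠ q := by rintro rfl; exact hxy rfl
    have h1 : p.1 ≠ q.1 := fun h => hpq (i1 p hp q hq h)
    have h2 : p.2 ≠ q.2 := fun h => hpq (i2 p hp q hq h)
    refine Finset.disjoint_union_left.mpr ⟨?_, ?_⟩ <;>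
      refine Finset.disjoint_union_right.mpr ⟨?_, ?_⟩
    · exact hPd (hf p hp) (hf q hq) h1
    · exact hd.mono (hPI p.1 (hf p hp)) (hQJ q.2 (hs q hq))
    · exact (hd.mono (hPI q.1 (hf q hq)) (hQJ p.2 (hs p hp))).symm
    · exact hQd (hs p hp) (hs q hq) h2

include hE hPne hQne in
lemma pts_ne : (⊥ : Finset (Fin k)) ∉ pts I J P Q E := by
  intro hmem
  have hf : ∀ p ∈ E, p.1 ∈ P := hfst hE
  simp only [pts, Finset.mem_union] at hmem
  rcases hmem with (hm | hm) | hm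
  · exact Finset.not_nonempty_empty (hPne _ (Finset.mem_sdiff.mp hm).1)
  · exact Finset.not_nonempty_empty (hQne _ (Finset.mem_sdiff.mp hm).1)
  · obtain ⟨p, hp, hpe⟩ := Finset.mem_image.mp hm
    have h2 : p.1 ∪ p.2 = ∅ := by simpa using hpe
    have h3 : p.1 = ∅ := (Finset.union_eq_empty.mp h2).1
    have := hPne p.1 (hf p hp)
    rw [h3] at this
    exact Finset.not_nonempty_empty this

include hE hIJ hPsup hQsup in
lemma pts_sup : (pts I J P Q E).sup id = Finset.univ := by
  classical
  apply Finset.Subset.antisymm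
  · intro x _
    exact Finset.mem_univ x
  · intro x _
    have hx : x ∈ I ∪ J := hIJ ▸ Finset.mem_univ x
    rw [Finset.mem_sup]
    rcases Finset.mem_union.mp hx with hxI | hxJ
    · have : x ∈ P.sup id := by rw [hPsup]; exact hxI
      obtain ⟨A, hA, hxA⟩ := Finset.mem_sup.mp this
      by_cases hAF : A ∈ E.image Prod.fst
      · obtain ⟨p, hp, rfl⟩ := Finset.mem_image.mp hAF
        exact ⟨p.1 ∪ p.2, Finset.mem_union_right _ (Finset.mem_image.mpr ⟨p, hp, rfl⟩),
          Finset.mem_union_left _ hxA⟩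
      · exact ⟨A, Finset.mem_union_left _ (Finset.mem_union_left _
          (Finset.mem_sdiff.mpr ⟨hA, hAF⟩)), hxA⟩
    · have : x ∈ Q.sup id := by rw [hQsup]; exact hxJ
      obtain ⟨C, hC, hxC⟩ := Finset.mem_sup.mp this
      by_cases hCG : C ∈ E.image Prod.snd
      · obtain ⟨p, hp, rfl⟩ := Finset.mem_image.mp hCG
        exact ⟨p.1 ∪ p.2, Finset.mem_union_right _ (Finset.mem_image.mpr ⟨p, hp, rfl⟩),
          Finset.mem_union_right _ hxC⟩
      · exact ⟨C, Finset.mem_union_left _ (Finset.mem_union_right _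
          (Finset.mem_sdiff.mpr ⟨hC, hCG⟩)), hxC⟩

include hd hPI hQJ hE in
lemma merge_inter_I : ∀ p ∈ E, (p.1 ∪ p.2) ∩ I = p.1 := by
  intro p hp
  rw [Finset.union_inter_distrib_right]
  have h1 : p.1 ∩ I = p.1 := Finset.inter_eq_left.mpr (hPI p.1 (hfst hE p hp))
  have h2 : p.2 ∩ I = ∅ := by
    rw [← Finset.disjoint_iff_inter_eq_empty]
    exact hd.symm.mono_left (hQJ p.2 (hsnd hE p hp))
  rw [h1, h2, Finset.union_empty]

include hd hPI hQJ hE in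
lemma merge_inter_J : ∀ p ∈ E, (p.1 ∪ p.2) ∩ J = p.2 := by
  intro p hp
  rw [Finset.union_inter_distrib_right]
  have h1 : p.2 ∩ J = p.2 := Finset.inter_eq_left.mpr (hQJ p.2 (hsnd hE p hp))
  have h2 : p.1 ∩ J = ∅ := by
    rw [← Finset.disjoint_iff_inter_eq_empty]
    exact hd.mono_left (hPI p.1 (hfst hE p hp))
  rw [h1, h2, Finset.empty_union]

include hd hE hPne hPI hQJ in
lemma pts_resI : ((pts I J P Q E).image (· ∩ I)).erase ∅ = P := by
  classical
  ext A
  constructor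
  · intro hA
    obtain ⟨hne, himg⟩ := Finset.mem_erase.mp hA
    obtain ⟨B, hB, rfl⟩ := Finset.mem_image.mp himg
    simp only [pts, Finset.mem_union] at hB
    rcases hB with (hB | hB) | hB
    · have hBP := (Finset.mem_sdiff.mp hB).1
      rwa [Finset.inter_eq_left.mpr (hPI B hBP)]
    · have hBQ := (Finset.mem_sdiff.mp hB).1
      exfalso
      apply hne
      rw [← Finset.disjoint_iff_inter_eq_empty]
      exact hd.symm.mono_left (hQJ B hBQ)
    · obtain ⟨p, hp, rfl⟩ := Finset.mem_image.mp hB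
      rw [merge_inter_I hd hPI hQJ hE p hp]
      exact hfst hE p hp
  · intro hA
    refine Finset.mem_erase.mpr ⟨Finset.nonempty_iff_ne_empty.mp (hPne A hA), ?_⟩
    by_cases hAF : A ∈ E.image Prod.fst
    · obtain ⟨p, hp, rfl⟩ := Finset.mem_image.mp hAF
      refine Finset.mem_image.mpr ⟨p.1 ∪ p.2, ?_, merge_inter_I hd hPI hQJ hE p hp⟩
      exact Finset.mem_union_right _ (Finset.mem_image.mpr ⟨p, hp, rfl⟩)
    · refine Finset.mem_image.mpr ⟨A, ?_, Finset.inter_eq_left.mpr (hPI A hA)⟩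
      exact Finset.mem_union_left _ (Finset.mem_union_left _ (Finset.mem_sdiff.mpr ⟨hA, hAF⟩))

include hd hE hQne hPI hQJ in
lemma pts_resJ : ((pts I J P Q E).image (· ∩ J)).erase ∅ = Q := by
  classical
  ext A
  constructor
  · intro hA
    obtain ⟨hne, himg⟩ := Finset.mem_erase.mp hA
    obtain ⟨B, hB, rfl⟩ := Finset.mem_image.mp himg
    simp only [pts, Finset.mem_union] at hB
    rcases hB with (hB | hB) | hB
    · have hBP := (Finset.mem_sdiff.mp hB).1
      exfalso
      apply hne
      rw [← Finset.disjoint_iff_inter_eq_empty]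
      exact hd.mono_left (hPI B hBP)
    · have hBQ := (Finset.mem_sdiff.mp hB).1
      rwa [Finset.inter_eq_left.mpr (hQJ B hBQ)]
    · obtain ⟨p, hp, rfl⟩ := Finset.mem_image.mp hB
      rw [merge_inter_J hd hPI hQJ hE p hp]
      exact hsnd hE p hp
  · intro hA
    refine Finset.mem_erase.mpr ⟨Finset.nonempty_iff_ne_empty.mp (hQne A hA), ?_⟩
    by_cases hAG : A ∈ E.image Prod.snd
    · obtain ⟨p, hp, rfl⟩ := Finset.mem_image.mp hAG
      refine Finset.mem_image.mpr ⟨p.1 ∪ p.2, ?_, merge_inter_J hd hPI hQJ hE p hp⟩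
      exact Finset.mem_union_right _ (Finset.mem_image.mpr ⟨p, hp, rfl⟩)
    · refine Finset.mem_image.mpr ⟨A, ?_, Finset.inter_eq_left.mpr (hQJ A hA)⟩
      exact Finset.mem_union_left _ (Finset.mem_union_right _ (Finset.mem_sdiff.mpr ⟨hA, hAG⟩))

include hd hE hPne hQne hPI hQJ in
lemma pts_card : (pts I J P Q E).card = P.card + Q.card - E.card
    ∧ E.card ≤ P.card ∧ E.card ≤ Q.card := by
  classical
  obtain ⟨hsub, i1, i2⟩ := mem_PIset.mp hE
  have hf : ∀ p ∈ E, p.1 ∈ P := hfst hE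
  have hs : ∀ p ∈ E, p.2 ∈ Q := hsnd hE
  set X := P \ E.image Prod.fst with hX
  set Y := Q \ E.image Prod.snd with hY
  set Z := E.image (fun p => p.1 ∪ p.2) with hZ
  have hcF : (E.image Prod.fst).card = E.card :=
    Finset.card_image_of_injOn (fun p hp q hq h => i1 p hp q hq h)
  have hcG : (E.image Prod.snd).card = E.card :=
    Finset.card_image_of_injOn (fun p hp q hq h => i2 p hp q hq h)
  have hFP : E.image Prod.fst ⊆ P := fun A hA => by
    obtain ⟨p, hp, rfl⟩ := Finset.mem_image.mp hA
    exact hf p hp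
  have hGQ : E.image Prod.snd ⊆ Q := fun C hC => by
    obtain ⟨p, hp, rfl⟩ := Finset.mem_image.mp hC
    exact hs p hp
  have hcZ : Z.card = E.card := by
    rw [hZ]
    apply Finset.card_image_of_injOn
    intro p hp q hq h
    apply i1 p hp q hq
    have h' : p.1 ∪ p.2 = q.1 ∪ q.2 := h
    have h1 := merge_inter_I hd hPI hQJ hE p hp
    have h2 := merge_inter_I hd hPI hQJ hE q hq
    rw [← h1, ← h2, h']
  have hrP : E.card ≤ P.card := hcF ▸ Finset.card_le_card hFP
  have hrQ : E.card ≤ Q.card := hcG ▸ Finset.card_le_card hGQ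
  have hdXY : Disjoint X Y := by
    rw [Finset.disjoint_left]
    intro A hA hA'
    have h1 : A ⊆ I := hPI A (Finset.mem_sdiff.mp hA).1
    have h2 : A ⊆ J := hQJ A (Finset.mem_sdiff.mp hA').1
    obtain ⟨x, hx⟩ := hPne A (Finset.mem_sdiff.mp hA).1
    exact Finset.disjoint_left.mp hd (h1 hx) (h2 hx)
  have hdXZ : Disjoint X Z := by
    rw [Finset.disjoint_left]
    intro A hA hA'
    obtain ⟨p, hp, hpe⟩ := Finset.mem_image.mp hA'
    have h1 : A ⊆ I := hPI A (Finset.mem_sdiff.mp hA).1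
    have h2 : p.2 ⊆ A := hpe ▸ Finset.subset_union_right
    obtain ⟨x, hx⟩ := hQne p.2 (hs p hp)
    exact Finset.disjoint_left.mp hd (h1 (h2 hx)) (hQJ p.2 (hs p hp) hx)
  have hdYZ : Disjoint Y Z := by
    rw [Finset.disjoint_left]
    intro A hA hA'
    obtain ⟨p, hp, hpe⟩ := Finset.mem_image.mp hA'
    have h1 : A ⊆ J := hQJ A (Finset.mem_sdiff.mp hA).1
    have h2 : p.1 ⊆ A := hpe ▸ Finset.subset_union_left
    obtain ⟨x, hx⟩ := hPne p.1 (hf p hp)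
    exact Finset.disjoint_left.mp hd (hPI p.1 (hf p hp) hx) (h1 (h2 hx))
  have hcard : (pts I J P Q E).card = X.card + Y.card + Z.card := by
    show ((X ∪ Y) ∪ Z).card = _
    rw [Finset.card_union_of_disjoint (Finset.disjoint_union_left.mpr ⟨hdXZ, hdYZ⟩),
      Finset.card_union_of_disjoint hdXY]
  have hcX : X.card = P.card - E.card := by rw [hX, Finset.card_sdiff_of_subset hFP, hcF]
  have hcY : Y.card = Q.card - E.card := by rw [hY, Finset.card_sdiff_of_subset hGQ, hcG]
  refine ⟨?_, hrP, hrQ⟩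
  rw [hcard, hcX, hcY, hcZ]
  omega

end ptslemmas

def jmap (I J : Finset (Fin k)) (π : Finpartition (Finset.univ : Finset (Fin k))) :
    Finset (Finset (Fin k) × Finset (Fin k)) :=
  (π.parts.filter (fun B => (B ∩ I).Nonempty ∧ (B ∩ J).Nonempty)).image
    (fun B => (B ∩ I, B ∩ J))

section jlemmas

variable (π : Finpartition (Finset.univ : Finset (Fin k)))
variable (h1 : ((π.parts.image (· ∩ I)).erase ∅) = P)
variable (h2 : ((π.parts.image (· ∩ J)).erase ∅) = Q)

include h1 h2 in
lemma jmap_mem : jmap I J π ∈ PIset P Q := by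
  classical
  rw [mem_PIset]
  refine ⟨?_, ?_, ?_⟩
  · intro q hq
    obtain ⟨B, hBf, rfl⟩ := Finset.mem_image.mp hq
    obtain ⟨hB, hBI, hBJ⟩ := Finset.mem_filter.mp hBf
    rw [Finset.mem_product]
    constructor
    · rw [← h1]
      exact Finset.mem_erase.mpr ⟨Finset.nonempty_iff_ne_empty.mp hBI,
        Finset.mem_image.mpr ⟨B, hB, rfl⟩⟩
    · rw [← h2]
      exact Finset.mem_erase.mpr ⟨Finset.nonempty_iff_ne_empty.mp hBJ,
        Finset.mem_image.mpr ⟨B, hB, rfl⟩⟩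
  · intro p hp q hq h
    obtain ⟨B, hBf, rfl⟩ := Finset.mem_image.mp hp
    obtain ⟨B', hBf', rfl⟩ := Finset.mem_image.mp hq
    obtain ⟨hB, hBI, _⟩ := Finset.mem_filter.mp hBf
    obtain ⟨hB', _, _⟩ := Finset.mem_filter.mp hBf'
    simp only at h
    obtain ⟨x, hx⟩ := hBI
    have hx' : x ∈ B' ∩ I := h ▸ hx
    have : B = B' := π.eq_of_mem_parts hB hB' (Finset.mem_inter.mp hx).1
      (Finset.mem_inter.mp hx').1
    rw [this]
  · intro p hp q hq h
    obtain ⟨B, hBf, rfl⟩ := Finset.mem_image.mp hp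
    obtain ⟨B', hBf', rfl⟩ := Finset.mem_image.mp hq
    obtain ⟨hB, _, hBJ⟩ := Finset.mem_filter.mp hBf
    obtain ⟨hB', _, _⟩ := Finset.mem_filter.mp hBf'
    simp only at h
    obtain ⟨x, hx⟩ := hBJ
    have hx' : x ∈ B' ∩ J := h ▸ hx
    have : B = B' := π.eq_of_mem_parts hB hB' (Finset.mem_inter.mp hx).1
      (Finset.mem_inter.mp hx').1
    rw [this]

end jlemmas

section jilemmas
variable {E : Finset (Finset (Fin k) × Finset (Fin k))} (hE : E ∈ PIset P Q)

include hd hE hPne hQne hPI hQJ in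
lemma ji_eq :
    (((pts I J P Q E).filter (fun B => (B ∩ I).Nonempty ∧ (B ∩ J).Nonempty)).image
      (fun B => (B ∩ I, B ∩ J))) = E := by
  classical
  have hZ : (pts I J P Q E).filter (fun B => (B ∩ I).Nonempty ∧ (B ∩ J).Nonempty)
      = E.image (fun p => p.1 ∪ p.2) := by
    ext B
    constructor
    · intro hB
      obtain ⟨hBm, hBI, hBJ⟩ := Finset.mem_filter.mp hB
      simp only [pts, Finset.mem_union] at hBm
      rcases hBm with (hm | hm) | hm
      · exfalso
        obtain ⟨x, hx⟩ := hBJ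
        have hBsub : B ⊆ I := hPI B (Finset.mem_sdiff.mp hm).1
        exact Finset.disjoint_left.mp hd (hBsub (Finset.mem_inter.mp hx).1)
          (Finset.mem_inter.mp hx).2
      · exfalso
        obtain ⟨x, hx⟩ := hBI
        have hBsub : B ⊆ J := hQJ B (Finset.mem_sdiff.mp hm).1
        exact Finset.disjoint_left.mp hd (Finset.mem_inter.mp hx).2
          (hBsub (Finset.mem_inter.mp hx).1)
      · exact hm
    · intro hB
      obtain ⟨p, hp, rfl⟩ := Finset.mem_image.mp hB
      refine Finset.mem_filter.mpr ⟨Finset.mem_union_right _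
        (Finset.mem_image.mpr ⟨p, hp, rfl⟩), ?_, ?_⟩
      · rw [merge_inter_I hd hPI hQJ hE p hp]
        exact hPne p.1 (hfst hE p hp)
      · rw [merge_inter_J hd hPI hQJ hE p hp]
        exact hQne p.2 (hsnd hE p hp)
  rw [hZ, Finset.image_image]
  have : ∀ p ∈ E, ((fun B => (B ∩ I, B ∩ J)) ∘ (fun p => p.1 ∪ p.2)) p = id p := by
    intro p hp
    simp only [Function.comp, id]
    rw [merge_inter_I hd hPI hQJ hE p hp, merge_inter_J hd hPI hQJ hE p hp]
  rw [Finset.image_congr this, Finset.image_id]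

end jilemmas

section ijlemmas
variable (π : Finpartition (Finset.univ : Finset (Fin k)))
variable (h1 : ((π.parts.image (· ∩ I)).erase ∅) = P)
variable (h2 : ((π.parts.image (· ∩ J)).erase ∅) = Q)

include hIJ h1 h2 in
lemma ij_subset : π.parts ⊆ pts I J P Q (jmap I J π) := by
  classical
  intro B hB
  have hBne := π.nonempty_of_mem_parts hB
  have hBdec : (B ∩ I) ∪ (B ∩ J) = B := by
    rw [← Finset.inter_union_distrib_left, hIJ, Finset.inter_univ]
  by_cases hI1 : (B ∩ I).Nonempty <;> by_cases hJ1 : (B ∩ J).Nonempty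
  · -- mixed: in Z
    apply Finset.mem_union_right
    refine Finset.mem_image.mpr ⟨(B ∩ I, B ∩ J), ?_, hBdec⟩
    exact Finset.mem_image.mpr ⟨B, Finset.mem_filter.mpr ⟨hB, hI1, hJ1⟩, rfl⟩
  · -- only I
    have hBJ : B ∩ J = ∅ := Finset.not_nonempty_iff_eq_empty.mp hJ1
    have hBI : B ∩ I = B := by rw [hBJ, Finset.union_empty] at hBdec; exact hBdec
    apply Finset.mem_union_left
    apply Finset.mem_union_left
    refine Finset.mem_sdiff.mpr ⟨?_, ?_⟩
    · rw [← h1]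
      exact Finset.mem_erase.mpr ⟨Finset.nonempty_iff_ne_empty.mp hBne,
        Finset.mem_image.mpr ⟨B, hB, hBI⟩⟩
    · intro hmem
      obtain ⟨p, hp, hpe⟩ := Finset.mem_image.mp hmem
      obtain ⟨B', hBf', hpe'⟩ := Finset.mem_image.mp hp
      obtain ⟨hB', hBI', hBJ'⟩ := Finset.mem_filter.mp hBf'
      have hfst' : B' ∩ I = B := by rw [← hpe]; rw [← hpe']
      obtain ⟨x, hx⟩ := hBI'
      have hxB : x ∈ B := hfst' ▸ hx
      have hxB' : x ∈ B' := (Finset.mem_inter.mp hx).1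
      have hBB' : B = B' := π.eq_of_mem_parts hB hB' hxB hxB'
      rw [hBB'] at hBJ
      obtain ⟨y, hy⟩ := hBJ'
      rw [hBJ] at hy
      exact absurd hy (Finset.notMem_empty y)
  · -- only J
    have hBI : B ∩ I = ∅ := Finset.not_nonempty_iff_eq_empty.mp hI1
    have hBJ : B ∩ J = B := by rw [hBI, Finset.empty_union] at hBdec; exact hBdec
    apply Finset.mem_union_left
    apply Finset.mem_union_right
    refine Finset.mem_sdiff.mpr ⟨?_, ?_⟩
    · rw [← h2]
      exact Finset.mem_erase.mpr ⟨Finset.nonempty_iff_ne_empty.mp hBne,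
        Finset.mem_image.mpr ⟨B, hB, hBJ⟩⟩
    · intro hmem
      obtain ⟨p, hp, hpe⟩ := Finset.mem_image.mp hmem
      obtain ⟨B', hBf', hpe'⟩ := Finset.mem_image.mp hp
      obtain ⟨hB', hBI', hBJ'⟩ := Finset.mem_filter.mp hBf'
      have hsnd' : B' ∩ J = B := by rw [← hpe]; rw [← hpe']
      obtain ⟨x, hx⟩ := hBJ'
      have hxB : x ∈ B := hsnd' ▸ hx
      have hxB' : x ∈ B' := (Finset.mem_inter.mp hx).1
      have hBB' : B = B' := π.eq_of_mem_parts hB hB' hxB hxB'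
      rw [hBB'] at hBI
      obtain ⟨y, hy⟩ := hBI'
      rw [hBI] at hy
      exact absurd hy (Finset.notMem_empty y)
  · exfalso
    have : B = ∅ := by
      rw [← hBdec, Finset.not_nonempty_iff_eq_empty.mp hI1,
        Finset.not_nonempty_iff_eq_empty.mp hJ1, Finset.union_empty]
    rw [this] at hBne
    exact Finset.not_nonempty_empty hBne

end ijlemmas

end fiberzero

lemma descFactorial_succ_eq (b r : ℕ) :
    b.descFactorial (r + 1) = b * (b - 1).descFactorial r := by
  cases b with
  | zero => simp
  | succ b => rw [Nat.succ_descFactorial_succ]; simp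

/-- Key numeric identity. -/
lemma Vlemma {R : Type*} [CommRing R] :
    ∀ (a b n : ℕ), a ≤ n →
    ∑ r ∈ range (a + 1), (-1 : R) ^ r * (a.choose r) * (b.descFactorial r) *
        ((n - r).factorial : ℕ) =
      ((n - a).factorial : ℕ) * ∏ i ∈ range a, ((n : R) - b - i) := by
  intro a
  induction a with
  | zero => intro b n _; simp
  | succ a ih =>
    intro b n hn
    have ha : a ≤ n := le_trans (Nat.le_succ a) hn
    have ha' : a ≤ n - 1 := by omega
    have pascal : ∀ r : ℕ, ((a+1).choose (r+1) : R) = (a.choose (r+1) : R) + (a.choose r : R) := by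
      intro r
      rw [Nat.choose_succ_succ]
      push_cast; ring
    rw [Finset.sum_range_succ' _ (a+1)]
    have hsplit : ∀ r ∈ range (a+1),
        (-1 : R) ^ (r+1) * ((a+1).choose (r+1)) * (b.descFactorial (r+1)) * ((n - (r+1)).factorial : ℕ)
        = ((-1 : R) ^ (r+1) * (a.choose (r+1)) * (b.descFactorial (r+1)) * ((n - (r+1)).factorial : ℕ))
          + (-1 : R) * ((-1 : R) ^ r * (a.choose r) * ((b:R) * ((b-1).descFactorial r)) * (((n-1) - r).factorial : ℕ)) := by
      intro r hr
      have h1 : n - (r+1) = (n-1) - r := by omega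
      rw [pascal, descFactorial_succ_eq, h1]
      push_cast
      ring
    rw [Finset.sum_congr rfl hsplit, Finset.sum_add_distrib]
    have e1 : (∑ r ∈ range (a+1), (-1 : R) ^ (r+1) * (a.choose (r+1)) * (b.descFactorial (r+1)) * ((n - (r+1)).factorial : ℕ))
        + (-1:R)^0 * ((a+1).choose 0) * (b.descFactorial 0) * ((n-0).factorial : ℕ)
        = ∑ r ∈ range (a + 1), (-1 : R) ^ r * (a.choose r) * (b.descFactorial r) * ((n - r).factorial : ℕ) := by
      rw [Finset.sum_range_succ _ a]
      have h0 : (a.choose (a+1) : R) = 0 := by simp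
      rw [h0,
        Finset.sum_range_succ' (fun r => (-1 : R) ^ r * (a.choose r) * (b.descFactorial r) * ((n - r).factorial : ℕ)) a]
      simp
    have e2 : ∑ r ∈ range (a+1), (-1 : R) * ((-1 : R) ^ r * (a.choose r) * ((b:R) * ((b-1).descFactorial r)) * (((n-1) - r).factorial : ℕ))
        = (-1 : R) * (b : R) * (((n-1) - a).factorial : ℕ) * ∏ i ∈ range a, (((n-1) : ℕ) - ((b-1):ℕ) - (i:R)) := by
      rw [← Finset.mul_sum]
      have : ∑ r ∈ range (a+1), (-1 : R) ^ r * (a.choose r) * ((b:R) * ((b-1).descFactorial r)) * (((n-1) - r).factorial : ℕ)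
          = (b:R) * ∑ r ∈ range (a+1), (-1 : R) ^ r * (a.choose r) * (((b-1).descFactorial r)) * (((n-1) - r).factorial : ℕ) := by
        rw [Finset.mul_sum]; exact Finset.sum_congr rfl (fun r _ => by ring)
      rw [this, ih (b-1) (n-1) ha']
      ring
    rw [add_right_comm, e1, e2, ih b n ha]
    rcases Nat.eq_zero_or_pos b with hb | hb
    · subst hb
      have hfac : ((n - a).factorial : R) = ((n : R) - a) * ((n - (a+1)).factorial : ℕ) := by
        have h2 : n - a = (n - (a+1)) + 1 := by omega
        rw [h2, Nat.factorial_succ]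
        have h3 : ((n - (a+1) : ℕ) : R) = (n:R) - (a+1) := by push_cast [Nat.cast_sub hn]; ring
        push_cast [h3]; ring
      rw [hfac, Finset.prod_range_succ]
      push_cast
      ring
    · have hc1 : (((n-1) : ℕ) : R) = (n : R) - 1 := by
        have h1 : (1:ℕ) ≤ n := by omega
        push_cast [Nat.cast_sub h1]; ring
      have hc2 : (((b-1) : ℕ) : R) = (b : R) - 1 := by
        push_cast [Nat.cast_sub hb]; ring
      have hn1a : n - 1 - a = n - (a+1) := by omega
      have hfac : ((n - a).factorial : R) = ((n : R) - a) * ((n - (a+1)).factorial : ℕ) := by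
        have h2 : n - a = (n - (a+1)) + 1 := by omega
        rw [h2, Nat.factorial_succ]
        have h3 : ((n - (a+1) : ℕ) : R) = (n:R) - (a+1) := by push_cast [Nat.cast_sub hn]; ring
        push_cast [h3]; ring
      have hP : (∏ i ∈ range a, ((((n-1):ℕ):R) - (((b-1):ℕ):R) - (i:R))) = ∏ i ∈ range a, ((n:R) - b - i) := by
        refine Finset.prod_congr rfl (fun i _ => ?_)
        rw [hc1, hc2]; ring
      rw [hP, hfac, Finset.prod_range_succ, hn1a]
      ring

section arith
variable {γ δ : Type*} [DecidableEq γ] [DecidableEq δ]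
variable {R : Type*} [CommRing R]

lemma step_arith (p b : ℕ) (f : ℕ → R) :
    (∑ r ∈ range (p + 1), ((p.choose r * b.descFactorial r : ℕ) : R) * f r)
      + (b : R) * ∑ r ∈ range (p + 1), ((p.choose r * (b-1).descFactorial r : ℕ) : R) * f (r + 1)
    = ∑ r ∈ range (p + 2), (((p+1).choose r * b.descFactorial r : ℕ) : R) * f r := by
  rw [Finset.sum_range_succ' (fun r => (((p+1).choose r * b.descFactorial r : ℕ) : R) * f r) (p+1)]
  rw [Finset.sum_range_succ' (fun r => ((p.choose r * b.descFactorial r : ℕ) : R) * f r) p]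
  rw [Finset.mul_sum]
  have hext : ∑ r ∈ range p, ((p.choose (r+1) * b.descFactorial (r+1) : ℕ) : R) * f (r+1)
      = ∑ r ∈ range (p+1), ((p.choose (r+1) * b.descFactorial (r+1) : ℕ) : R) * f (r+1) := by
    rw [Finset.sum_range_succ]
    simp
  rw [hext, add_right_comm, ← Finset.sum_add_distrib]
  congr 1
  · refine Finset.sum_congr rfl (fun r _ => ?_)
    rw [Nat.choose_succ_succ, descFactorial_succ_eq]
    push_cast
    ring
  · simp
end arith

lemma PIsum {γ δ : Type*} [DecidableEq γ] [DecidableEq δ] {R : Type*} [CommRing R] (f : ℕ → R) (Q : Finset δ) (P : Finset γ) :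
    ∑ E ∈ PIset P Q, f E.card
      = ∑ r ∈ range (P.card + 1), ((P.card.choose r * Q.card.descFactorial r : ℕ) : R) * f r := by
  induction P using Finset.induction_on generalizing Q f with
  | empty =>
    have h : PIset (∅ : Finset γ) Q = {∅} := by
      ext E
      simp only [mem_PIset, Finset.mem_singleton]
      constructor
      · rintro ⟨hsub, -, -⟩
        rw [Finset.empty_product] at hsub
        exact Finset.subset_empty.mp hsub
      · rintro rfl
        simp
    rw [h]
    simp
  | @insert a P ha ih =>
    classical
    set S := PIset (insert a P) Q with hS
    have h0 : S.filter (fun E => ∀ p ∈ E, p.1 ≠ a) = PIset P Q := by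
      ext E
      simp only [Finset.mem_filter, mem_PIset, hS]
      constructor
      · rintro ⟨⟨hsub, h1, h2⟩, hne⟩
        refine ⟨fun q hq => ?_, h1, h2⟩
        have := hsub hq
        rw [Finset.mem_product] at this ⊢
        refine ⟨?_, this.2⟩
        rcases Finset.mem_insert.mp this.1 with h | h
        · exact absurd h (hne q hq)
        · exact h
      · rintro ⟨hsub, h1, h2⟩
        refine ⟨⟨fun q hq => ?_, h1, h2⟩, fun q hq => ?_⟩
        · have := hsub hq
          rw [Finset.mem_product] at this ⊢
          exact ⟨Finset.mem_insert_of_mem this.1, this.2⟩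
        · have := (Finset.mem_product.mp (hsub hq)).1
          rintro rfl
          exact ha this
    have h1 : S.filter (fun E => ¬ ∀ p ∈ E, p.1 ≠ a)
        = Q.biUnion (fun C => (PIset P (Q.erase C)).image (insert (a, C))) := by
      ext E
      simp only [Finset.mem_filter, Finset.mem_biUnion, Finset.mem_image]
      constructor
      · rintro ⟨hE, hex⟩
        push_neg at hex
        obtain ⟨p, hp, hpa⟩ := hex
        obtain ⟨hsub, i1, i2⟩ := mem_PIset.mp hE
        have hpC : p = (a, p.2) := by
          ext <;> simp [hpa]
        have hC : p.2 ∈ Q := (Finset.mem_product.mp (hsub hp)).2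
        refine ⟨p.2, hC, E.erase (a, p.2), ?_, ?_⟩
        · rw [mem_PIset]
          refine ⟨fun q hq => ?_, ?_, ?_⟩
          · have hqE : q ∈ E := Finset.mem_of_mem_erase hq
            have hqne : q ≠ (a, p.2) := Finset.ne_of_mem_erase hq
            have hq1 : q.1 ≠ a := by
              intro h
              exact hqne (by rw [← hpC]; exact i1 q hqE p hp (by rw [h, hpa]) ▸ (i1 q hqE p hp (by rw [h, hpa])) ▸ rfl)
            have hq2 : q.2 ≠ p.2 := by
              intro h
              exact hqne (by rw [← hpC]; exact i2 q hqE p hp h)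
            have := Finset.mem_product.mp (hsub hqE)
            rw [Finset.mem_product]
            constructor
            · rcases Finset.mem_insert.mp this.1 with h | h
              · exact absurd h hq1
              · exact h
            · exact Finset.mem_erase.mpr ⟨hq2, this.2⟩
          · intro q hq q' hq' h
            exact i1 q (Finset.mem_of_mem_erase hq) q' (Finset.mem_of_mem_erase hq') h
          · intro q hq q' hq' h
            exact i2 q (Finset.mem_of_mem_erase hq) q' (Finset.mem_of_mem_erase hq') h
        · rw [← hpC]
          exact Finset.insert_erase hp
      · rintro ⟨C, hC, E', hE', rfl⟩
        obtain ⟨hsub, i1, i2⟩ := mem_PIset.mp hE'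
        have haE' : ∀ q ∈ E', q.1 ≠ a := by
          intro q hq h
          have := (Finset.mem_product.mp (hsub hq)).1
          rw [h] at this
          exact ha this
        have hCE' : ∀ q ∈ E', q.2 ≠ C := by
          intro q hq h
          have := (Finset.mem_product.mp (hsub hq)).2
          rw [h] at this
          exact (Finset.mem_erase.mp this).1 rfl
        constructor
        · rw [hS, mem_PIset]
          refine ⟨fun q hq => ?_, ?_, ?_⟩
          · rcases Finset.mem_insert.mp hq with rfl | hq
            · rw [Finset.mem_product]
              exact ⟨Finset.mem_insert_self a _, hC⟩
            · have := Finset.mem_product.mp (hsub hq)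
              rw [Finset.mem_product]
              exact ⟨Finset.mem_insert_of_mem this.1, Finset.mem_of_mem_erase this.2⟩
          · intro q hq q' hq' h
            rcases Finset.mem_insert.mp hq with rfl | hq <;>
              rcases Finset.mem_insert.mp hq' with rfl | hq'
            · rfl
            · exact absurd h.symm (haE' q' hq')
            · exact absurd h (haE' q hq)
            · exact i1 q hq q' hq' h
          · intro q hq q' hq' h
            rcases Finset.mem_insert.mp hq with rfl | hq <;>
              rcases Finset.mem_insert.mp hq' with rfl | hq'
            · rfl
            · exact absurd h.symm (hCE' q' hq')
            · exact absurd h (hCE' q hq)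
            · exact i2 q hq q' hq' h
        · push_neg
          exact ⟨(a, C), Finset.mem_insert_self _ _, rfl⟩
    have hdisj : (Q : Set δ).PairwiseDisjoint
        (fun C => (PIset P (Q.erase C)).image (insert (a, C))) := by
      intro C hCm C' hC'm hne
      simp only [Finset.disjoint_left, Finset.mem_image]
      rintro E ⟨E₁, hE₁, rfl⟩ ⟨E₂, hE₂, hEq⟩
      have h1 : (a, C') ∈ insert (a, C) E₁ := by
        rw [← hEq]; exact Finset.mem_insert_self _ _
      rcases Finset.mem_insert.mp h1 with h | h
      · exact hne (by injection h.symm)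
      · have := (Finset.mem_product.mp ((mem_PIset.mp hE₁).1 h)).1
        exact ha this
    have hinj : ∀ C ∈ Q, ∀ E₁ ∈ PIset P (Q.erase C), ∀ E₂ ∈ PIset P (Q.erase C),
        insert (a, C) E₁ = insert (a, C) E₂ → E₁ = E₂ := by
      intro C _ E₁ hE₁ E₂ hE₂ h
      have hn1 : (a, C) ∉ E₁ := by
        intro hm
        exact ha (Finset.mem_product.mp ((mem_PIset.mp hE₁).1 hm)).1
      have hn2 : (a, C) ∉ E₂ := by
        intro hm
        exact ha (Finset.mem_product.mp ((mem_PIset.mp hE₂).1 hm)).1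
      rw [← Finset.erase_insert hn1, ← Finset.erase_insert hn2, h]
    have hsum : ∑ E ∈ S, f E.card
        = (∑ E ∈ PIset P Q, f E.card)
          + ∑ C ∈ Q, ∑ E' ∈ PIset P (Q.erase C), f (E'.card + 1) := by
      rw [← Finset.sum_filter_add_sum_filter_not S (fun E => ∀ p ∈ E, p.1 ≠ a), h0, h1,
        Finset.sum_biUnion hdisj]
      congr 1
      refine Finset.sum_congr rfl (fun C hC => ?_)
      rw [Finset.sum_image (hinj C hC)]
      refine Finset.sum_congr rfl (fun E' hE' => ?_)
      have hn : (a, C) ∉ E' := by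
        intro hm
        exact ha (Finset.mem_product.mp ((mem_PIset.mp hE').1 hm)).1
      rw [Finset.card_insert_of_notMem hn]
    rw [hsum, ih, Finset.card_insert_of_notMem ha]
    have hcongr : ∑ C ∈ Q, ∑ E' ∈ PIset P (Q.erase C), f (E'.card + 1)
        = (Q.card : R) * ∑ r ∈ range (P.card + 1),
            ((P.card.choose r * (Q.card - 1).descFactorial r : ℕ) : R) * f (r + 1) := by
      rw [Finset.sum_congr rfl (fun C hC => by
        rw [ih (fun n => f (n+1)) (Q.erase C), Finset.card_erase_of_mem hC])]
      rw [Finset.sum_const, nsmul_eq_mul]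
    rw [hcongr]
    exact step_arith P.card Q.card f

section main
variable {R : Type*} [CommRing R]

lemma crux_numeric (a b : ℕ) (ha : 1 ≤ a) (hb : 1 ≤ b)
    (V : ∀ (a b n : ℕ), a ≤ n →
      ∑ r ∈ range (a + 1), (-1 : R) ^ r * (a.choose r) * (b.descFactorial r) *
          ((n - r).factorial : ℕ) =
        ((n - a).factorial : ℕ) * ∏ i ∈ range a, ((n : R) - b - i)) :
    ∑ r ∈ range (a + 1), ((a.choose r * b.descFactorial r : ℕ) : R) * wgt R (a + b - r) = 0 := by
  set n := a + b - 1 with hn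
  have han : a ≤ n := by omega
  have key : ∀ r ∈ range (a+1),
      ((a.choose r * b.descFactorial r : ℕ) : R) * wgt R (a + b - r)
      = (-1 : R)^n * ((-1 : R) ^ r * (a.choose r) * (b.descFactorial r) * ((n - r).factorial : ℕ)) := by
    intro r hr
    have hrn : r ≤ n := by
      simp only [mem_range] at hr; omega
    have h1 : a + b - r - 1 = n - r := by omega
    have h2 : (-1 : R) ^ (n - r) = (-1 : R)^n * (-1 : R)^r := by
      calc (-1:R)^(n-r) = (-1:R)^(n-r) * ((-1:R)^r * (-1:R)^r) := by
            rw [← pow_add, ← two_mul, pow_mul]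
            norm_num
        _ = (-1:R)^(n-r+r) * (-1:R)^r := by rw [pow_add]; ring
        _ = (-1:R)^n * (-1:R)^r := by rw [Nat.sub_add_cancel hrn]
    rw [wgt, h1, h2]
    push_cast
    ring
  rw [Finset.sum_congr rfl key, ← Finset.mul_sum, V a b n han]
  have hz : ((n : R) - b - ((a-1 : ℕ) : R)) = 0 := by
    have c1 : ((n : ℕ) : R) = (a : R) + b - 1 := by
      rw [hn]; push_cast [Nat.cast_sub (by omega : 1 ≤ a + b)]; ring
    have c2 : (((a-1) : ℕ) : R) = (a : R) - 1 := by push_cast [Nat.cast_sub ha]; ring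
    rw [c1, c2]; ring
  have hmem : a - 1 ∈ range a := by
    rw [Finset.mem_range]; omega
  rw [Finset.prod_eq_zero hmem hz, mul_zero, mul_zero]

end main

lemma fiber_zero {R : Type*} [CommRing R] {k : ℕ}
    {I J : Finset (Fin k)} (hd : Disjoint I J) (hIJ : I ∪ J = Finset.univ)
    (hI : I.Nonempty) (hJ : J.Nonempty)
    {P Q : Finset (Finset (Fin k))}
    (hPne : ∀ A ∈ P, A.Nonempty) (hPI : ∀ A ∈ P, A ⊆ I)
    (hQne : ∀ C ∈ Q, C.Nonempty) (hQJ : ∀ C ∈ Q, C ⊆ J)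
    (hPd : (P : Set (Finset (Fin k))).PairwiseDisjoint id)
    (hQd : (Q : Set (Finset (Fin k))).PairwiseDisjoint id)
    (hPsup : P.sup id = I) (hQsup : Q.sup id = J) :
    ∑ π ∈ (Finset.univ : Finset (Finpartition (Finset.univ : Finset (Fin k)))).filter
        (fun π => ((π.parts.image (· ∩ I)).erase ∅) = P ∧ ((π.parts.image (· ∩ J)).erase ∅) = Q),
      wgt R π.parts.card = 0 := by
  classical
  have hPnonempty : P.Nonempty := by
    rcases Finset.eq_empty_or_nonempty P with h | h
    · exfalso
      rw [h, Finset.sup_empty] at hPsup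
      obtain ⟨x, hx⟩ := hI
      rw [← hPsup] at hx
      simp at hx
    · exact h
  have hQnonempty : Q.Nonempty := by
    rcases Finset.eq_empty_or_nonempty Q with h | h
    · exfalso
      rw [h, Finset.sup_empty] at hQsup
      obtain ⟨x, hx⟩ := hJ
      rw [← hQsup] at hx
      simp at hx
    · exact h
  have ha : 1 ≤ P.card := Finset.card_pos.mpr hPnonempty
  have hb : 1 ≤ Q.card := Finset.card_pos.mpr hQnonempty
  have key : ∑ E ∈ PIset P Q, wgt R (P.card + Q.card - E.card)
      = ∑ π ∈ (Finset.univ : Finset (Finpartition (Finset.univ : Finset (Fin k)))).filter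
        (fun π => ((π.parts.image (· ∩ I)).erase ∅) = P ∧ ((π.parts.image (· ∩ J)).erase ∅) = Q),
      wgt R π.parts.card := by
    refine Finset.sum_bij'
      (fun E hE => (⟨pts I J P Q E,
        Finset.supIndep_iff_pairwiseDisjoint.mpr (pts_pd hd hPne hPI hQne hQJ hPd hQd hE),
        pts_sup hIJ hPsup hQsup hE, pts_ne hPne hQne hE⟩ :
          Finpartition (Finset.univ : Finset (Fin k))))
      (fun π _ => jmap I J π) ?_ ?_ ?_ ?_ ?_
    · intro E hE
      refine Finset.mem_filter.mpr ⟨Finset.mem_univ _, ?_, ?_⟩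
      · exact pts_resI hd hPne hPI hQJ hE
      · exact pts_resJ hd hPI hQne hQJ hE
    · intro π hπ
      obtain ⟨-, h1, h2⟩ := Finset.mem_filter.mp hπ
      exact jmap_mem π h1 h2
    · intro E hE
      exact ji_eq hd hPne hPI hQne hQJ hE
    · intro π hπ
      obtain ⟨-, h1, h2⟩ := Finset.mem_filter.mp hπ
      exact (parts_subset_eq _ _ (ij_subset hIJ π h1 h2)).symm
    · intro E hE
      have hc := pts_card hd hPne hPI hQne hQJ hE
      show wgt R (P.card + Q.card - E.card) = wgt R _
      rw [show (Finpartition.mk (pts I J P Q E) _ _ _).parts = pts I J P Q E from rfl, hc.1]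
  rw [← key]
  rw [PIsum (fun r => wgt R (P.card + Q.card - r)) Q P]
  exact crux_numeric P.card Q.card ha hb (fun a b n h => Vlemma a b n h)

theorem mixed_cumulant_vanishes_aux {R : Type*} [CommRing R]
    (k : ℕ) (m : Finset (Fin k) → R) (hone : m ∅ = 1)
    (I J : Finset (Fin k)) (hI : I.Nonempty) (hJ : J.Nonempty)
    (hd : Disjoint I J) (hIJ : I ∪ J = Finset.univ)
    (hfact : ∀ S ⊆ I, ∀ T ⊆ J, m (S ∪ T) = m S * m T) :
    ∑ π : Finpartition (Finset.univ : Finset (Fin k)),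
      (Nat.factorial (π.parts.card - 1) : R) * (-1 : R) ^ (π.parts.card - 1) *
        ∏ B ∈ π.parts, m B = 0 := by
  classical
  have hsummand : ∀ π : Finpartition (Finset.univ : Finset (Fin k)),
      (Nat.factorial (π.parts.card - 1) : R) * (-1 : R) ^ (π.parts.card - 1) *
        ∏ B ∈ π.parts, m B
      = wgt R π.parts.card *
          ((∏ A ∈ (π.parts.image (· ∩ I)).erase ∅, m A) *
            (∏ C ∈ (π.parts.image (· ∩ J)).erase ∅, m C)) := by
    intro π
    have hres : ∀ (K : Finset (Fin k)),
        ∏ B ∈ π.parts, m (B ∩ K) = ∏ A ∈ (π.parts.image (· ∩ K)).erase ∅, m A := by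
      intro K
      rw [← Finset.prod_filter_mul_prod_filter_not π.parts (fun B => (B ∩ K).Nonempty)]
      have h2 : ∏ B ∈ π.parts.filter (fun B => ¬(B ∩ K).Nonempty), m (B ∩ K) = 1 :=
        Finset.prod_eq_one (fun B hB => by
          rw [Finset.not_nonempty_iff_eq_empty.mp (Finset.mem_filter.mp hB).2]; exact hone)
      rw [h2, mul_one]
      have him : (π.parts.image (· ∩ K)).erase ∅
          = (π.parts.filter (fun B => (B ∩ K).Nonempty)).image (· ∩ K) := by
        ext A
        simp only [Finset.mem_erase, Finset.mem_image, Finset.mem_filter]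
        constructor
        · rintro ⟨hne, B, hB, rfl⟩
          exact ⟨B, ⟨hB, Finset.nonempty_iff_ne_empty.mpr hne⟩, rfl⟩
        · rintro ⟨B, ⟨hB, hBne⟩, rfl⟩
          exact ⟨Finset.nonempty_iff_ne_empty.mp hBne, B, hB, rfl⟩
      rw [him, Finset.prod_image]
      intro B hB B' hB' h
      obtain ⟨hBm, hBne⟩ := Finset.mem_filter.mp hB
      obtain ⟨hBm', -⟩ := Finset.mem_filter.mp hB'
      obtain ⟨x, hx⟩ := hBne
      have hx' : x ∈ B' ∩ K := (show B ∩ K = B' ∩ K from h) ▸ hx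
      exact π.eq_of_mem_parts hBm hBm' (Finset.mem_inter.mp hx).1 (Finset.mem_inter.mp hx').1
    have hsplit : ∏ B ∈ π.parts, m B
        = (∏ B ∈ π.parts, m (B ∩ I)) * ∏ B ∈ π.parts, m (B ∩ J) := by
      rw [← Finset.prod_mul_distrib]
      refine Finset.prod_congr rfl (fun B _ => ?_)
      have hdec : B = (B ∩ I) ∪ (B ∩ J) := by
        rw [← Finset.inter_union_distrib_left, hIJ, Finset.inter_univ]
      conv_lhs => rw [hdec]
      exact hfact _ Finset.inter_subset_right _ Finset.inter_subset_right
    rw [hsplit, hres I, hres J, wgt]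
  rw [Finset.sum_congr rfl (fun π _ => hsummand π)]
  rw [← Finset.sum_fiberwise (Finset.univ : Finset (Finpartition (Finset.univ : Finset (Fin k))))
    (fun π => (((π.parts.image (· ∩ I)).erase ∅), ((π.parts.image (· ∩ J)).erase ∅)))
    (fun π => wgt R π.parts.card *
      ((∏ A ∈ (π.parts.image (· ∩ I)).erase ∅, m A) *
        (∏ C ∈ (π.parts.image (· ∩ J)).erase ∅, m C)))]
  apply Finset.sum_eq_zero
  intro c _
  have hfc : ∀ π ∈ (Finset.univ : Finset (Finpartition (Finset.univ : Finset (Fin k)))).filter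
      (fun π => (((π.parts.image (· ∩ I)).erase ∅), ((π.parts.image (· ∩ J)).erase ∅)) = c),
      wgt R π.parts.card *
        ((∏ A ∈ (π.parts.image (· ∩ I)).erase ∅, m A) *
          (∏ C ∈ (π.parts.image (· ∩ J)).erase ∅, m C))
      = wgt R π.parts.card * ((∏ A ∈ c.1, m A) * (∏ C ∈ c.2, m C)) := by
    intro π hπ
    obtain ⟨-, heq⟩ := Finset.mem_filter.mp hπ
    rw [← heq]
  rw [Finset.sum_congr rfl hfc, ← Finset.sum_mul]
  rcases Finset.eq_empty_or_nonempty ((Finset.univ :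
      Finset (Finpartition (Finset.univ : Finset (Fin k)))).filter
      (fun π => (((π.parts.image (· ∩ I)).erase ∅), ((π.parts.image (· ∩ J)).erase ∅)) = c))
    with hemp | ⟨π₀, hπ₀⟩
  · rw [hemp, Finset.sum_empty, zero_mul]
  · obtain ⟨-, heq₀⟩ := Finset.mem_filter.mp hπ₀
    have h1 : ((π₀.parts.image (· ∩ I)).erase ∅) = c.1 := by rw [← heq₀]
    have h2 : ((π₀.parts.image (· ∩ J)).erase ∅) = c.2 := by rw [← heq₀]
    -- properties of c.1 and c.2
    have hπd : ∀ B ∈ π₀.parts, ∀ B' ∈ π₀.parts, B ≠ B' → Disjoint B B' := by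
      intro B hB B' hB' hne
      exact Finset.supIndep_iff_pairwiseDisjoint.mp π₀.supIndep hB hB' hne
    have hPne : ∀ A ∈ c.1, A.Nonempty := by
      intro A hA
      rw [← h1] at hA
      exact Finset.nonempty_iff_ne_empty.mpr (Finset.mem_erase.mp hA).1
    have hQne : ∀ C ∈ c.2, C.Nonempty := by
      intro C hC
      rw [← h2] at hC
      exact Finset.nonempty_iff_ne_empty.mpr (Finset.mem_erase.mp hC).1
    have hPI : ∀ A ∈ c.1, A ⊆ I := by
      intro A hA
      rw [← h1] at hA
      obtain ⟨B, -, rfl⟩ := Finset.mem_image.mp (Finset.mem_erase.mp hA).2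
      exact Finset.inter_subset_right
    have hQJ : ∀ C ∈ c.2, C ⊆ J := by
      intro C hC
      rw [← h2] at hC
      obtain ⟨B, -, rfl⟩ := Finset.mem_image.mp (Finset.mem_erase.mp hC).2
      exact Finset.inter_subset_right
    have hPd : ((c.1 : Finset (Finset (Fin k))) : Set (Finset (Fin k))).PairwiseDisjoint id := by
      intro A hA A' hA' hne
      simp only [Finset.mem_coe] at hA hA'
      rw [← h1] at hA hA'
      obtain ⟨B, hB, rfl⟩ := Finset.mem_image.mp (Finset.mem_erase.mp hA).2
      obtain ⟨B', hB', rfl⟩ := Finset.mem_image.mp (Finset.mem_erase.mp hA').2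
      have hBB' : B ≠ B' := by rintro rfl; exact hne rfl
      exact (hπd B hB B' hB' hBB').mono Finset.inter_subset_left Finset.inter_subset_left
    have hQd : ((c.2 : Finset (Finset (Fin k))) : Set (Finset (Fin k))).PairwiseDisjoint id := by
      intro A hA A' hA' hne
      simp only [Finset.mem_coe] at hA hA'
      rw [← h2] at hA hA'
      obtain ⟨B, hB, rfl⟩ := Finset.mem_image.mp (Finset.mem_erase.mp hA).2
      obtain ⟨B', hB', rfl⟩ := Finset.mem_image.mp (Finset.mem_erase.mp hA').2
      have hBB' : B ≠ B' := by rintro rfl; exact hne rfl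
      exact (hπd B hB B' hB' hBB').mono Finset.inter_subset_left Finset.inter_subset_left
    have hPsup : c.1.sup id = I := by
      apply Finset.Subset.antisymm
      · exact Finset.sup_le (fun A hA => hPI A hA)
      · intro x hx
        obtain ⟨B, hB, hxB⟩ := π₀.exists_mem (Finset.mem_univ x)
        rw [Finset.mem_sup]
        refine ⟨B ∩ I, ?_, Finset.mem_inter.mpr ⟨hxB, hx⟩⟩
        rw [← h1]
        refine Finset.mem_erase.mpr ⟨?_, Finset.mem_image.mpr ⟨B, hB, rfl⟩⟩
        exact Finset.nonempty_iff_ne_empty.mp ⟨x, Finset.mem_inter.mpr ⟨hxB, hx⟩⟩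
    have hQsup : c.2.sup id = J := by
      apply Finset.Subset.antisymm
      · exact Finset.sup_le (fun C hC => hQJ C hC)
      · intro x hx
        obtain ⟨B, hB, hxB⟩ := π₀.exists_mem (Finset.mem_univ x)
        rw [Finset.mem_sup]
        refine ⟨B ∩ J, ?_, Finset.mem_inter.mpr ⟨hxB, hx⟩⟩
        rw [← h2]
        refine Finset.mem_erase.mpr ⟨?_, Finset.mem_image.mpr ⟨B, hB, rfl⟩⟩
        exact Finset.nonempty_iff_ne_empty.mp ⟨x, Finset.mem_inter.mpr ⟨hxB, hx⟩⟩
    have hfilter : (Finset.univ : Finset (Finpartition (Finset.univ : Finset (Fin k)))).filter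
        (fun π => (((π.parts.image (· ∩ I)).erase ∅), ((π.parts.image (· ∩ J)).erase ∅)) = c)
        = (Finset.univ : Finset (Finpartition (Finset.univ : Finset (Fin k)))).filter
        (fun π => ((π.parts.image (· ∩ I)).erase ∅) = c.1 ∧
          ((π.parts.image (· ∩ J)).erase ∅) = c.2) := by
      apply Finset.filter_congr
      intro π _
      rw [Prod.ext_iff]
    rw [hfilter,
      fiber_zero hd hIJ hI hJ hPne hPI hQne hQJ hPd hQd hPsup hQsup, zero_mul]

/-- The joint cumulant of `(X_j)_{j∈S}`, defined from an abstract expectation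
functional `m` (where `m B = E[Π_{j∈B} X_j]`) by the Möbius partition formula
`κ S = Σ_{π∈Π(S)} (|π|-1)!(-1)^{|π|-1} Π_{B∈π} m B`. -/
noncomputable def jointCumulant {R : Type*} [CommRing R] {k : ℕ}
    (m : Finset (Fin k) → R) (S : Finset (Fin k)) : R :=
  ∑ π : Finpartition S,
    (Nat.factorial (π.parts.card - 1) : R) * (-1 : R) ^ (π.parts.card - 1) *
      ∏ B ∈ π.parts, m B

/-- Vanishing of mixed cumulants: if `{1,…,k}` (`k ≥ 2`) splits into two
non-empty disjoint sets `I`, `J` such that the expectation factorizes over the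
two groups, then the joint cumulant `κ(X_1,…,X_k)` vanishes. -/
theorem mixed_cumulant_vanishes {R : Type*} [CommRing R]
    (k : ℕ) (hk : 2 ≤ k) (m : Finset (Fin k) → R) (hone : m ∅ = 1)
    (I J : Finset (Fin k)) (hI : I.Nonempty) (hJ : J.Nonempty)
    (hd : Disjoint I J) (hIJ : I ∪ J = Finset.univ)
    (hfact : ∀ S ⊆ I, ∀ T ⊆ J, m (S ∪ T) = m S * m T) :
    jointCumulant m (Finset.univ : Finset (Fin k)) = 0 := by
  rw [jointCumulant]
  exact mixed_cumulant_vanishes_aux k m hone I J hI hJ hd hIJ hfact
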